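/- Let C be an additive category. Then the sequential completion Ĉ is an additive category and the canonical functor C → Ĉ (sending an object to its constant sequence) is an additive functor. -/

import Mathlib

/-!
STATEMENT 6: If `C` is an additive category (preadditive with finite biproducts), then
the sequential completion `Ĉ` is additive and the canonical functor `C ⥤ Ĉ` is additive.
-/

open CategoryTheory CategoryTheory.Limits

universe v u

namespace SeqCompletion

def IsCauchy {C : Type u} [Category.{v} C] (X : ℕ ⥤ C) : Prop :=
  ∀ C' : C, ∃ n : ℕ, ∀ (i j : ℕ), n ≤ i → ∀ (hij : i ≤ j),
    Function.Bijective (fun g : C' ⟶ X.obj i => g ≫ X.map (homOfLE hij))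

variable (C : Type u) [Category.{v} C]

abbrev CauchCat := ObjectProperty.FullSubcategory (fun X : ℕ ⥤ C => IsCauchy X)

def evtInv : MorphismProperty (CauchCat C) := fun X _Y φ =>
  ∀ C' : C, ∃ n : ℕ, ∀ i : ℕ, n ≤ i →
    Function.Bijective (fun g : C' ⟶ X.obj.obj i =>
      g ≫ ((ObjectProperty.ι _).map φ).app i)

/-- The sequential completion `Ĉ = Cauch(ℕ, C)[S⁻¹]`. -/
abbrev Shat := (evtInv C).Localization

/-- The functor `C ⥤ Cauch(ℕ, C)` sending an object to the constant sequence. -/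
def constCauchy : C ⥤ CauchCat C :=
  ObjectProperty.lift _ (Functor.const ℕ) (fun X C' =>
    ⟨0, fun i j _ hij => by
      simp only [Functor.const_obj_obj, Functor.const_obj_map, Category.comp_id]
      exact Function.bijective_id⟩)

section Aux

variable {C}

/-- Monotone reindexing function dominating `N`. -/
def rfun (N : ℕ → ℕ) (i : ℕ) : ℕ := i + (Finset.range (i + 1)).sup N

lemma rfun_mono (N : ℕ → ℕ) : Monotone (rfun N) := fun i j hij =>
  add_le_add hij (Finset.sup_mono (Finset.range_subset_range.2 (by omega)))

lemma le_rfun (N : ℕ → ℕ) (i : ℕ) : i ≤ rfun N i := Nat.le_add_right _ _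

lemma N_le_rfun (N : ℕ → ℕ) {k i : ℕ} (h : k ≤ i) : N k ≤ rfun N i :=
  le_trans (Finset.le_sup (Finset.mem_range.2 (by omega))) (Nat.le_add_left _ _)

/-- Reindexing a sequence along `rfun N`. -/
def reindex (N : ℕ → ℕ) (X : ℕ ⥤ C) : ℕ ⥤ C := (rfun_mono N).functor ⋙ X

@[simp] lemma reindex_obj (N : ℕ → ℕ) (X : ℕ ⥤ C) (i : ℕ) :
    (reindex N X).obj i = X.obj (rfun N i) := rfl

lemma reindex_map (N : ℕ → ℕ) (X : ℕ ⥤ C) {i j : ℕ} (hij : i ≤ j) :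
    (reindex N X).map (homOfLE hij) = X.map (homOfLE (rfun_mono N hij)) := by
  dsimp [reindex]
  congr 1

/-- The canonical natural transformation to the reindexed sequence. -/
def toReindex (N : ℕ → ℕ) (X : ℕ ⥤ C) : X ⟶ reindex N X where
  app i := X.map (homOfLE (le_rfun N i))
  naturality i j f := by
    show X.map f ≫ X.map _ = X.map _ ≫ X.map ((rfun_mono N).functor.map f)
    rw [← X.map_comp, ← X.map_comp]
    congr 1

lemma isCauchy_reindex (N : ℕ → ℕ) {X : ℕ ⥤ C} (hX : IsCauchy X) :
    IsCauchy (reindex N X) := by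
  intro C'
  obtain ⟨n, hn⟩ := hX C'
  refine ⟨n, fun i j hi hij => ?_⟩
  exact hn (rfun N i) (rfun N j) (le_trans hi (le_rfun N i)) (rfun_mono N hij)

/-- The reindexed object as a Cauchy sequence. -/
def reindexC (N : ℕ → ℕ) (X : CauchCat C) : CauchCat C :=
  ⟨reindex N X.obj, isCauchy_reindex N X.property⟩

/-- The canonical morphism in `CauchCat` to the reindexed sequence. -/
def toReindexC (N : ℕ → ℕ) (X : CauchCat C) : X ⟶ reindexC N X :=
  ObjectProperty.homMk (toReindex N X.obj)

lemma evtInv_toReindexC (N : ℕ → ℕ) (X : CauchCat C) :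
    evtInv C (toReindexC N X) := by
  intro C'
  obtain ⟨n, hn⟩ := X.property C'
  exact ⟨n, fun i hi => hn i (rfun N i) hi (le_rfun N i)⟩


variable (C)

instance evtInv_isMultiplicative : (evtInv C).IsMultiplicative where
  id_mem X := fun C' => ⟨0, fun i _ => by
    have : (fun g : C' ⟶ X.obj.obj i =>
        g ≫ ((ObjectProperty.ι _).map (𝟙 X)).app i) = id := by
      funext g
      exact Category.comp_id g
    rw [this]
    exact Function.bijective_id⟩
  comp_mem {X Y Z} f g hf hg := fun C' => by
    obtain ⟨n₁, h₁⟩ := hf C'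
    obtain ⟨n₂, h₂⟩ := hg C'
    refine ⟨max n₁ n₂, fun i hi => ?_⟩
    have := Function.Bijective.comp (h₂ i (le_trans (le_max_right _ _) hi))
      (h₁ i (le_trans (le_max_left _ _) hi))
    have he : (fun g' : C' ⟶ X.obj.obj i =>
        g' ≫ ((ObjectProperty.ι _).map (f ≫ g)).app i) =
        (fun t : C' ⟶ Y.obj.obj i => t ≫ ((ObjectProperty.ι _).map g).app i) ∘
        (fun t : C' ⟶ X.obj.obj i => t ≫ ((ObjectProperty.ι _).map f).app i) := by
      funext t
      dsimp only [Function.comp]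
      rw [Functor.map_comp, NatTrans.comp_app, Category.assoc]
    rw [he]
    exact this

variable {C}

theorem evtInv_exists_leftFraction {X Y : CauchCat C}
    (φ : (evtInv C).RightFraction X Y) :
    ∃ (ψ : (evtInv C).LeftFraction X Y), φ.f ≫ ψ.s = φ.s ≫ ψ.f := by
  obtain ⟨X', s, hs, f, rfl⟩ := φ.cases
  classical
  choose n₁ hn₁ using fun i => hs (X.obj.obj i)
  choose n₂ hn₂ using fun i => hs (X'.obj.obj i)
  set N : ℕ → ℕ := fun i => max (n₁ i) (n₂ i) with hN
  have hb₁ : ∀ i j, i ≤ j → Function.Bijective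
      (fun g : X.obj.obj i ⟶ X'.obj.obj (rfun N j) => g ≫ s.hom.app (rfun N j)) :=
    fun i j hij => hn₁ i (rfun N j) (le_trans (le_max_left _ _) (N_le_rfun N hij))
  have hb₂ : ∀ i, Function.Bijective
      (fun g : X'.obj.obj i ⟶ X'.obj.obj (rfun N i) => g ≫ s.hom.app (rfun N i)) :=
    fun i => hn₂ i (rfun N i) (le_trans (le_max_right _ _) (N_le_rfun N (le_refl i)))
  have hh := fun i => (hb₁ i i (le_refl i)).surjective (X.obj.map (homOfLE (le_rfun N i)))
  set h : ∀ i, X.obj.obj i ⟶ X'.obj.obj (rfun N i) := fun i => (hh i).choose with hhdef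
  have hfac : ∀ i, h i ≫ s.hom.app (rfun N i) = X.obj.map (homOfLE (le_rfun N i)) :=
    fun i => (hh i).choose_spec
  have hnat : ∀ i j (hij : i ≤ j),
      h i ≫ X'.obj.map (homOfLE (rfun_mono N hij)) = X.obj.map (homOfLE hij) ≫ h j := by
    intro i j hij
    apply (hb₁ i j hij).injective
    show _ ≫ s.hom.app (rfun N j) = _ ≫ s.hom.app (rfun N j)
    rw [Category.assoc, Category.assoc, s.hom.naturality (homOfLE (rfun_mono N hij)),
      ← Category.assoc, hfac i, hfac j, ← Functor.map_comp, ← Functor.map_comp]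
    congr 1
  have hsh : ∀ i, s.hom.app i ≫ h i = X'.obj.map (homOfLE (le_rfun N i)) := by
    intro i
    apply (hb₂ i).injective
    show _ ≫ s.hom.app (rfun N i) = _ ≫ s.hom.app (rfun N i)
    rw [Category.assoc, hfac i, s.hom.naturality (homOfLE (le_rfun N i))]
  refine ⟨MorphismProperty.LeftFraction.mk (Y' := reindexC N Y)
      (ObjectProperty.homMk ({ app := fun i => h i ≫ f.hom.app (rfun N i), naturality := ?_ } :
        X.obj ⟶ (reindexC N Y).obj))
      (toReindexC N Y) (evtInv_toReindexC N Y), ?_⟩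
  · intro i j u
    have hij : i ≤ j := leOfHom u
    have hu : u = homOfLE hij := Subsingleton.elim _ _
    subst hu
    show X.obj.map (homOfLE hij) ≫ (h j ≫ f.hom.app (rfun N j)) =
      (h i ≫ f.hom.app (rfun N i)) ≫ (reindexC N Y).obj.map (homOfLE hij)
    simp only [reindexC, Category.assoc, reindex_map]
    have e := f.hom.naturality (homOfLE (rfun_mono N hij))
    have e2 := hnat i j hij
    calc _ = (X.obj.map (homOfLE hij) ≫ h j) ≫ f.hom.app (rfun N j) := (Category.assoc _ _ _).symm
      _ = (h i ≫ X'.obj.map (homOfLE (rfun_mono N hij))) ≫ f.hom.app (rfun N j) :=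
          congrArg (· ≫ f.hom.app (rfun N j)) e2.symm
      _ = h i ≫ (X'.obj.map (homOfLE (rfun_mono N hij)) ≫ f.hom.app (rfun N j)) :=
          Category.assoc _ _ _
      _ = h i ≫ (f.hom.app (rfun N i) ≫ Y.obj.map (homOfLE (rfun_mono N hij))) := congrArg _ e
      _ = _ := (Category.assoc _ _ _).symm
  · apply ObjectProperty.hom_ext; apply NatTrans.ext
    funext i
    show f.hom.app i ≫ (toReindex N Y.obj).app i = s.hom.app i ≫ (h i ≫ f.hom.app (rfun N i))
    rw [← Category.assoc, hsh i]
    exact (f.hom.naturality (homOfLE (le_rfun N i))).symm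

theorem evtInv_ext {X'' X Y : CauchCat C} (f₁ f₂ : X ⟶ Y) (s : X'' ⟶ X)
    (hs : evtInv C s) (hf : s ≫ f₁ = s ≫ f₂) :
    ∃ (Y' : CauchCat C) (t : Y ⟶ Y') (_ : evtInv C t), f₁ ≫ t = f₂ ≫ t := by
  classical
  choose n₁ hn₁ using fun i => hs (X.obj.obj i)
  set N : ℕ → ℕ := n₁ with hN
  refine ⟨reindexC N Y, toReindexC N Y, evtInv_toReindexC N Y, ?_⟩
  apply ObjectProperty.hom_ext; apply NatTrans.ext
  funext i
  obtain ⟨u, hu⟩ := (hn₁ i (rfun N i) (N_le_rfun N (le_refl i))).surjective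
    (X.obj.map (homOfLE (le_rfun N i)))
  show f₁.hom.app i ≫ (toReindex N Y.obj).app i = f₂.hom.app i ≫ (toReindex N Y.obj).app i
  have e₁ : f₁.hom.app i ≫ Y.obj.map (homOfLE (le_rfun N i)) =
      u ≫ (s ≫ f₁).hom.app (rfun N i) := by
    rw [← f₁.hom.naturality (homOfLE (le_rfun N i))]
    show X.obj.map _ ≫ _ = u ≫ s.hom.app _ ≫ f₁.hom.app _
    rw [← Category.assoc]
    exact congrArg (· ≫ f₁.hom.app (rfun N i)) hu.symm
  have e₂ : f₂.hom.app i ≫ Y.obj.map (homOfLE (le_rfun N i)) =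
      u ≫ (s ≫ f₂).hom.app (rfun N i) := by
    rw [← f₂.hom.naturality (homOfLE (le_rfun N i))]
    show X.obj.map _ ≫ _ = u ≫ s.hom.app _ ≫ f₂.hom.app _
    rw [← Category.assoc]
    exact congrArg (· ≫ f₂.hom.app (rfun N i)) hu.symm
  show f₁.hom.app i ≫ Y.obj.map (homOfLE (le_rfun N i)) = f₂.hom.app i ≫ Y.obj.map (homOfLE (le_rfun N i))
  rw [e₁, e₂, hf]

instance : (evtInv C).HasLeftCalculusOfFractions where
  exists_leftFraction _ _ φ := evtInv_exists_leftFraction φ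
  ext _ _ _ f₁ f₂ s hs hf := evtInv_ext f₁ f₂ s hs hf


section Additive

variable [Preadditive C] [HasFiniteBiproducts C]

instance : HasBinaryBiproducts C := hasBinaryBiproducts_of_finite_biproducts (C := C)

lemma bijective_biprod_map {C' A B A' B' : C} {u : A ⟶ A'} {v : B ⟶ B'}
    (hu : Function.Bijective (fun g : C' ⟶ A => g ≫ u))
    (hv : Function.Bijective (fun g : C' ⟶ B => g ≫ v)) :
    Function.Bijective (fun g : C' ⟶ A ⊞ B => g ≫ biprod.map u v) := by
  constructor
  · intro g₁ g₂ hg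
    dsimp at hg
    apply biprod.hom_ext
    · apply hu.injective
      have := congrArg (· ≫ biprod.fst) hg
      simpa using this
    · apply hv.injective
      have := congrArg (· ≫ biprod.snd) hg
      simpa using this
  · intro k
    obtain ⟨a, ha⟩ := hu.surjective (k ≫ biprod.fst)
    obtain ⟨b, hb⟩ := hv.surjective (k ≫ biprod.snd)
    refine ⟨biprod.lift a b, ?_⟩
    dsimp at ha hb ⊢
    apply biprod.hom_ext <;> simp [ha, hb]

/-- Pointwise biproduct of two sequences. -/
noncomputable def biprodSeq (X Y : ℕ ⥤ C) : ℕ ⥤ C where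
  obj i := X.obj i ⊞ Y.obj i
  map f := biprod.map (X.map f) (Y.map f)

lemma isCauchy_biprodSeq {X Y : ℕ ⥤ C} (hX : IsCauchy X) (hY : IsCauchy Y) :
    IsCauchy (biprodSeq X Y) := by
  intro C'
  obtain ⟨n₁, h₁⟩ := hX C'
  obtain ⟨n₂, h₂⟩ := hY C'
  refine ⟨max n₁ n₂, fun i j hi hij => ?_⟩
  exact bijective_biprod_map (h₁ i j (le_trans (le_max_left _ _) hi) hij)
    (h₂ i j (le_trans (le_max_right _ _) hi) hij)

/-- Pointwise biproduct of two Cauchy sequences. -/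
noncomputable def biprodC (X Y : CauchCat C) : CauchCat C :=
  ⟨biprodSeq X.obj Y.obj, isCauchy_biprodSeq X.property Y.property⟩

/-- The binary bicone exhibiting `biprodC X Y` as a biproduct. -/
noncomputable def biconeC (X Y : CauchCat C) : BinaryBicone X Y where
  pt := biprodC X Y
  fst := ({ app := fun i => (biprod.fst : X.obj.obj i ⊞ Y.obj.obj i ⟶ X.obj.obj i),
            naturality := by
              intro i j f
              show biprod.map (X.obj.map f) (Y.obj.map f) ≫ biprod.fst =
                biprod.fst ≫ X.obj.map f
              simp } :
    (biprodC X Y).obj ⟶ X.obj) |> ObjectProperty.homMk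
  snd := ({ app := fun i => (biprod.snd : X.obj.obj i ⊞ Y.obj.obj i ⟶ Y.obj.obj i),
            naturality := by
              intro i j f
              show biprod.map (X.obj.map f) (Y.obj.map f) ≫ biprod.snd =
                biprod.snd ≫ Y.obj.map f
              simp } :
    (biprodC X Y).obj ⟶ Y.obj) |> ObjectProperty.homMk
  inl := ({ app := fun i => (biprod.inl : X.obj.obj i ⟶ X.obj.obj i ⊞ Y.obj.obj i),
            naturality := by
              intro i j f
              show X.obj.map f ≫ biprod.inl =
                biprod.inl ≫ biprod.map (X.obj.map f) (Y.obj.map f)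
              simp } :
    X.obj ⟶ (biprodC X Y).obj) |> ObjectProperty.homMk
  inr := ({ app := fun i => (biprod.inr : Y.obj.obj i ⟶ X.obj.obj i ⊞ Y.obj.obj i),
            naturality := by
              intro i j f
              show Y.obj.map f ≫ biprod.inr =
                biprod.inr ≫ biprod.map (X.obj.map f) (Y.obj.map f)
              simp } :
    Y.obj ⟶ (biprodC X Y).obj) |> ObjectProperty.homMk
  inl_fst := by
    apply ObjectProperty.hom_ext; apply NatTrans.ext; funext i
    show biprod.inl ≫ biprod.fst = 𝟙 (X.obj.obj i)
    simp
  inl_snd := by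
    apply ObjectProperty.hom_ext; apply NatTrans.ext; funext i
    show biprod.inl ≫ biprod.snd = (0 : X.obj.obj i ⟶ Y.obj.obj i)
    simp
  inr_fst := by
    apply ObjectProperty.hom_ext; apply NatTrans.ext; funext i
    show biprod.inr ≫ biprod.fst = (0 : Y.obj.obj i ⟶ X.obj.obj i)
    simp
  inr_snd := by
    apply ObjectProperty.hom_ext; apply NatTrans.ext; funext i
    show biprod.inr ≫ biprod.snd = 𝟙 (Y.obj.obj i)
    simp

instance hasBinaryBiproducts_cauchCat : HasBinaryBiproducts (CauchCat C) where
  has_binary_biproduct X Y := HasBinaryBiproduct.mk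
    { bicone := biconeC X Y
      isBilimit := isBinaryBilimitOfTotal _ (by
        apply ObjectProperty.hom_ext; apply NatTrans.ext; funext i
        show biprod.fst ≫ biprod.inl + biprod.snd ≫ biprod.inr = 𝟙 (X.obj.obj i ⊞ Y.obj.obj i)
        exact biprod.total) }

open ZeroObject in
instance hasZeroObject_cauchCat : HasZeroObject (CauchCat C) :=
  ⟨⟨⟨(Functor.const ℕ).obj 0, fun C' =>
      ⟨0, fun i j _ hij => by
        simp only [Functor.const_obj_obj, Functor.const_obj_map, Category.comp_id]
        exact Function.bijective_id⟩⟩, by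
    rw [IsZero.iff_id_eq_zero]
    apply ObjectProperty.hom_ext; apply NatTrans.ext; funext i
    apply Limits.id_zero⟩⟩

instance hasFiniteBiproducts_cauchCat : HasFiniteBiproducts (CauchCat C) := by
  have : HasFiniteProducts (CauchCat C) := hasFiniteProducts_of_has_binary_and_terminal
  exact HasFiniteBiproducts.of_hasFiniteProducts


instance constCauchy_additive : (constCauchy C).Additive where
  map_add {X Y f g} := by
    apply ObjectProperty.hom_ext; apply NatTrans.ext
    funext i
    show f + g = ((constCauchy C).map f).hom.app i + ((constCauchy C).map g).hom.app i
    rfl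

end Additive

end Aux

/-- `Ĉ` carries a preadditive structure with finite biproducts (i.e. it is an additive
category) making the canonical functor `C ⥤ Ĉ` additive. -/
theorem shat_additive [Preadditive C] [HasFiniteBiproducts C] :
    ∃ h : Preadditive (Shat C),
      @HasFiniteBiproducts (Shat C) _ (@Preadditive.preadditiveHasZeroMorphisms _ _ h) ∧
      @Functor.Additive C (Shat C) _ _ _ h (constCauchy C ⋙ (evtInv C).Q) := by
  letI h : Preadditive (Shat C) := inferInstance
  refine ⟨h, ?_, ?_⟩
  · haveI : HasZeroObject (Shat C) := (evtInv C).Q.hasZeroObject_of_additive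
    haveI : PreservesBiproductsOfShape WalkingPair (evtInv C).Q :=
      PreservesFiniteBiproducts.preserves
    haveI : PreservesBinaryBiproducts (evtInv C).Q :=
      preservesBinaryBiproducts_of_preservesBiproducts (evtInv C).Q
    haveI : (evtInv C).Q.EssSurj := Localization.essSurj _ (evtInv C)
    haveI : HasBinaryBiproducts (Shat C) := by
      constructor
      intro X' Y'
      set X := (evtInv C).Q.objPreimage X'
      set Y := (evtInv C).Q.objPreimage Y'
      haveI : HasBinaryBiproduct ((evtInv C).Q.obj X) ((evtInv C).Q.obj Y) :=
        HasBinaryBiproduct.mk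
          { bicone := (evtInv C).Q.mapBinaryBicone (BinaryBiproduct.bicone X Y)
            isBilimit := isBinaryBilimitOfPreserves _ (BinaryBiproduct.isBilimit X Y) }
      haveI : HasBinaryProduct X' Y' := hasLimit_of_iso
        (F := pair ((evtInv C).Q.obj X) ((evtInv C).Q.obj Y)) (G := pair X' Y')
        (mapPairIso ((evtInv C).Q.objObjPreimageIso X') ((evtInv C).Q.objObjPreimageIso Y'))
      exact HasBinaryBiproduct.of_hasBinaryProduct X' Y'
    have : HasFiniteProducts (Shat C) := hasFiniteProducts_of_has_binary_and_terminal
    exact HasFiniteBiproducts.of_hasFiniteProducts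
  · exact Functor.instAdditiveComp _ _


end SeqCompletion
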